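/- Let p be an even integer with p > 2 and let ν be a real number with 0 < ν < (p−2)/p. There exists a constant C > 0, depending only on p and ν, such that for every function f : ℂ → ℝ that is continuously differentiable on an open neighborhood of the closed unit disk D = {z ∈ ℂ : ‖z‖ ≤ 1} and satisfies f(0) = 0: ∫_D |f(z)|^p · ‖z‖^{−(νp + 2)} dA(z) ≤ C · (∫_D |f(z)|^p dA(z) + ∫_D ‖Df(z)‖^p dA(z)). -/

import Mathlib

open MeasureTheory Metric
open scoped ENNReal NNReal

section Aux

theorem lintegral_rpow_Ioc {r : ℝ} (hr : -1 < r) :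
    ∫⁻ t in Set.Ioc (0:ℝ) 1, ENNReal.ofReal (t ^ r) = ENNReal.ofReal (1/(r+1)) := by
  have hr1 : 0 < r + 1 := by linarith
  have hint : IntegrableOn (fun t : ℝ => t ^ r) (Set.Ioc 0 1) := by
    have := intervalIntegral.intervalIntegrable_rpow' (a := 0) (b := 1) hr
    rwa [intervalIntegrable_iff_integrableOn_Ioc_of_le zero_le_one] at this
  rw [← ofReal_integral_eq_lintegral_ofReal hint]
  · congr 1
    rw [← intervalIntegral.integral_of_le zero_le_one,
      integral_rpow (Or.inl hr), Real.one_rpow, Real.zero_rpow hr1.ne']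
    ring
  · filter_upwards [ae_restrict_mem measurableSet_Ioc] with t ht
    exact Real.rpow_nonneg ht.1.le _

theorem lintegral_rpow_Icc_tail {α s : ℝ} (hα : 0 < α) (hs : 0 < s) (hs1 : s ≤ 1) :
    ∫⁻ t in Set.Icc s 1, ENNReal.ofReal (t ^ (-(1+α))) ≤ ENNReal.ofReal (s ^ (-α) / α) := by
  have hcont : ContinuousOn (fun t : ℝ => t ^ (-(1+α))) (Set.Icc s 1) := by
    intro t ht
    exact (Real.continuousAt_rpow_const t _ (Or.inl (by linarith [ht.1]))).continuousWithinAt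
  have hint : IntegrableOn (fun t : ℝ => t ^ (-(1+α))) (Set.Icc s 1) :=
    hcont.integrableOn_compact isCompact_Icc
  rw [← ofReal_integral_eq_lintegral_ofReal hint]
  · apply ENNReal.ofReal_le_ofReal
    have h0 : (0:ℝ) ∉ Set.uIcc s 1 := by
      rw [Set.uIcc_of_le hs1]; intro h; exact absurd h.1 (not_le.2 hs)
    have hne : -(1+α) ≠ -1 := by
      intro h
      exact absurd (by linarith : α = 0) hα.ne'
    rw [integral_Icc_eq_integral_Ioc, ← intervalIntegral.integral_of_le hs1,
      integral_rpow (Or.inr ⟨hne, h0⟩)]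
    have he : -(1+α) + 1 = -α := by ring
    rw [he, Real.one_rpow]
    have hco : (1 - s ^ (-α)) / (-α) = (s ^ (-α) - 1)/α := by
      rw [div_neg, ← neg_div, neg_sub]
    rw [hco, div_le_div_iff₀ hα hα]
    nlinarith [Real.rpow_pos_of_pos hs (-α)]
  · filter_upwards [ae_restrict_mem measurableSet_Icc] with t ht
    exact Real.rpow_nonneg (le_trans hs.le ht.1) _

theorem hoelder_step {P : ℝ} (hP : 2 < P) {g : ℝ → ℝ≥0∞} (hg : Measurable g) :
    (∫⁻ t in Set.Ioc (0:ℝ) 1, g t) ^ P ≤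
      ENNReal.ofReal (((P-1)/(P-2)) ^ (P-1)) *
        ∫⁻ t in Set.Ioc (0:ℝ) 1, ENNReal.ofReal t * g t ^ P := by
  have hP1 : 1 < P := by linarith
  have hP0 : (0:ℝ) < P := by linarith
  have hPm1 : P - 1 ≠ 0 := by intro h; linarith
  have hPm2 : P - 2 ≠ 0 := by intro h; linarith
  set q : ℝ := P/(P-1) with hq
  have hpq : q.HolderConjugate P := (Real.HolderConjugate.conjExponent hP1).symm
  set u : ℝ → ℝ≥0∞ := fun t => (ENNReal.ofReal t) ^ (-(1/P)) with hu_def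
  set v : ℝ → ℝ≥0∞ := fun t => (ENNReal.ofReal t) ^ (1/P) * g t with hv_def
  have hu : Measurable u :=
    ENNReal.continuous_rpow_const.measurable.comp ENNReal.measurable_ofReal
  have hv : Measurable v :=
    (ENNReal.continuous_rpow_const.measurable.comp ENNReal.measurable_ofReal).mul hg
  have hsplit : ∫⁻ t in Set.Ioc (0:ℝ) 1, g t = ∫⁻ t in Set.Ioc (0:ℝ) 1, (u * v) t := by
    apply setLIntegral_congr_fun measurableSet_Ioc
    intro t ht
    have hx0 : ENNReal.ofReal t ≠ 0 := by
      simpa [ENNReal.ofReal_eq_zero, not_le] using ht.1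
    simp only [Pi.mul_apply, hu_def, hv_def, ← mul_assoc]
    rw [← ENNReal.rpow_add _ _ hx0 ENNReal.ofReal_ne_top]
    norm_num
  have hholder := ENNReal.lintegral_mul_le_Lp_mul_Lq (volume.restrict (Set.Ioc (0:ℝ) 1))
    hpq hu.aemeasurable hv.aemeasurable
  have huq : ∀ t ∈ Set.Ioc (0:ℝ) 1, u t ^ q = ENNReal.ofReal (t ^ (-(1/(P-1)))) := by
    intro t ht
    have hxy : -(1/P) * q = -(1/(P-1)) := by
      rw [hq]; field_simp
    rw [hu_def, ← ENNReal.rpow_mul, hxy, ENNReal.ofReal_rpow_of_pos ht.1]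
  have hBu : ∫⁻ t in Set.Ioc (0:ℝ) 1, u t ^ q = ENNReal.ofReal ((P-1)/(P-2)) := by
    rw [setLIntegral_congr_fun measurableSet_Ioc
      huq, lintegral_rpow_Ioc (by
        rw [neg_lt, neg_neg]
        rw [div_lt_one (by linarith)]
        linarith)]
    congr 1
    have : -(1/(P-1)) + 1 = (P-2)/(P-1) := by field_simp; ring
    rw [this, one_div_div]
  have hvP : ∀ t, v t ^ P = ENNReal.ofReal t * g t ^ P := by
    intro t
    rw [hv_def, ENNReal.mul_rpow_of_nonneg _ _ hP0.le, ← ENNReal.rpow_mul,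
      one_div, inv_mul_cancel₀ hP0.ne', ENNReal.rpow_one]
  have hIv : ∫⁻ t in Set.Ioc (0:ℝ) 1, v t ^ P
      = ∫⁻ t in Set.Ioc (0:ℝ) 1, ENNReal.ofReal t * g t ^ P := by
    simp_rw [hvP]
  set I := ∫⁻ t in Set.Ioc (0:ℝ) 1, ENNReal.ofReal t * g t ^ P with hI
  have key : ∫⁻ t in Set.Ioc (0:ℝ) 1, g t ≤
      ENNReal.ofReal ((P-1)/(P-2)) ^ (1/q) * I ^ (1/P) := by
    rw [hsplit]
    calc ∫⁻ t in Set.Ioc (0:ℝ) 1, (u * v) t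
        ≤ (∫⁻ t in Set.Ioc (0:ℝ) 1, u t ^ q) ^ (1/q) *
          (∫⁻ t in Set.Ioc (0:ℝ) 1, v t ^ P) ^ (1/P) := hholder
      _ = ENNReal.ofReal ((P-1)/(P-2)) ^ (1/q) * I ^ (1/P) := by rw [hBu, hIv]
  calc (∫⁻ t in Set.Ioc (0:ℝ) 1, g t) ^ P
      ≤ (ENNReal.ofReal ((P-1)/(P-2)) ^ (1/q) * I ^ (1/P)) ^ P :=
        ENNReal.rpow_le_rpow key hP0.le
    _ = ENNReal.ofReal ((P-1)/(P-2)) ^ (P-1) * I := by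
        rw [ENNReal.mul_rpow_of_nonneg _ _ hP0.le, ← ENNReal.rpow_mul, ← ENNReal.rpow_mul]
        congr 2
        · rw [hq]; field_simp
        · rw [one_div, inv_mul_cancel₀ hP0.ne', ENNReal.rpow_one]
    _ = ENNReal.ofReal (((P-1)/(P-2)) ^ (P-1)) * I := by
        rw [ENNReal.ofReal_rpow_of_pos (by apply div_pos <;> linarith)]

theorem ftc_ray_bound (f : ℂ → ℝ) (U : Set ℂ) (hU : IsOpen U)
    (hDU : closedBall (0 : ℂ) 1 ⊆ U) (hf : ContDiffOn ℝ 1 f U) (hf0 : f 0 = 0)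
    {z : ℂ} (hz : z ∈ closedBall (0 : ℂ) 1) :
    |f z| ≤ (∫ t in (0:ℝ)..1, ‖fderiv ℝ f (t • z)‖) * ‖z‖ := by
  have hmem : ∀ t ∈ Set.Icc (0:ℝ) 1, t • z ∈ closedBall (0 : ℂ) 1 := by
    intro t ht
    rw [mem_closedBall_zero_iff] at hz ⊢
    rw [norm_smul]
    calc ‖t‖ * ‖z‖ ≤ 1 * 1 := by
          apply mul_le_mul _ hz (norm_nonneg _) zero_le_one
          rw [Real.norm_eq_abs, abs_le]; constructor <;> linarith [ht.1, ht.2]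
      _ = 1 := by ring
  have hfc : ContinuousOn (fderiv ℝ f) U := hf.continuousOn_fderiv_of_isOpen hU le_rfl
  have hcont : ContinuousOn (fun t : ℝ => fderiv ℝ f (t • z)) (Set.Icc 0 1) := by
    apply hfc.comp (Continuous.continuousOn (by continuity))
    intro t ht; exact hDU (hmem t ht)
  have hderiv : ∀ t ∈ Set.uIcc (0:ℝ) 1,
      HasDerivAt (fun s : ℝ => f (s • z)) ((fderiv ℝ f (t • z)) z) t := by
    intro t ht
    rw [Set.uIcc_of_le zero_le_one] at ht
    have hdiff : DifferentiableAt ℝ f (t • z) :=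
      (hf.differentiableOn one_ne_zero).differentiableAt (hU.mem_nhds (hDU (hmem t ht)))
    have h1 : HasDerivAt (fun s : ℝ => s • z) z t := by
      simpa using (hasDerivAt_id t).smul_const z
    exact hdiff.hasFDerivAt.comp_hasDerivAt t h1
  have hint : IntervalIntegrable (fun t : ℝ => (fderiv ℝ f (t • z)) z) volume 0 1 := by
    apply ContinuousOn.intervalIntegrable
    rw [Set.uIcc_of_le zero_le_one]
    exact hcont.clm_apply continuousOn_const
  have hftc : (∫ t in (0:ℝ)..1, (fderiv ℝ f (t • z)) z) = f z := by
    rw [intervalIntegral.integral_eq_sub_of_hasDerivAt hderiv hint]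
    simp [hf0]
  calc |f z| = ‖∫ t in (0:ℝ)..1, (fderiv ℝ f (t • z)) z‖ := by
        rw [hftc]; exact (Real.norm_eq_abs _).symm
    _ ≤ ∫ t in (0:ℝ)..1, ‖(fderiv ℝ f (t • z)) z‖ :=
        intervalIntegral.norm_integral_le_integral_norm zero_le_one
    _ ≤ ∫ t in (0:ℝ)..1, ‖fderiv ℝ f (t • z)‖ * ‖z‖ := by
        apply intervalIntegral.integral_mono_on zero_le_one
        · apply ContinuousOn.intervalIntegrable
          rw [Set.uIcc_of_le zero_le_one]; exact hcont.clm_apply continuousOn_const |>.norm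
        · apply ContinuousOn.intervalIntegrable
          rw [Set.uIcc_of_le zero_le_one]; exact hcont.norm.mul continuousOn_const
        · intro t _; exact (fderiv ℝ f (t • z)).le_opNorm z
    _ = (∫ t in (0:ℝ)..1, ‖fderiv ℝ f (t • z)‖) * ‖z‖ :=
        intervalIntegral.integral_mul_const _ _

theorem lintegral_comp_smul_complex (F : ℂ → ℝ≥0∞) (hF : Measurable F) {t : ℝ} (ht : t ≠ 0) :
    ∫⁻ z, F (t • z) = ENNReal.ofReal ((t^2)⁻¹) * ∫⁻ w, F w := by
  have hmap : Measure.map (t • · : ℂ → ℂ) volume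
      = ENNReal.ofReal |(t ^ Module.finrank ℝ ℂ)⁻¹| • volume :=
    MeasureTheory.Measure.map_addHaar_smul volume ht
  have h1 : ∫⁻ w, F w ∂(Measure.map (t • · : ℂ → ℂ) volume) = ∫⁻ z, F (t • z) :=
    lintegral_map hF (measurable_const_smul t)
  rw [← h1, hmap, lintegral_smul_measure, Complex.finrank_real_complex]
  congr 1
  rw [abs_of_nonneg (inv_nonneg.2 (sq_nonneg t))]

end Aux

theorem weighted_disk_estimate (p : ℕ) (hp : 2 < p) (hpeven : Even p)
    (ν : ℝ) (hν : 0 < ν) (hν' : ν < ((p : ℝ) - 2) / p) :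
    ∃ C > 0, ∀ (f : ℂ → ℝ) (U : Set ℂ), IsOpen U → closedBall (0 : ℂ) 1 ⊆ U →
      ContDiffOn ℝ 1 f U → f 0 = 0 →
      (∫⁻ z in closedBall (0 : ℂ) 1,
          ENNReal.ofReal (|f z| ^ p * ‖z‖ ^ (-(ν * p + 2)))) ≤
        ENNReal.ofReal
          (C * ((∫ z in closedBall (0 : ℂ) 1, |f z| ^ p) +
            ∫ z in closedBall (0 : ℂ) 1, ‖fderiv ℝ f z‖ ^ p)) := by
  have hP : (2:ℝ) < (p:ℝ) := by exact_mod_cast hp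
  set P : ℝ := (p:ℝ) with hPdef
  have hP0 : (0:ℝ) < P := by linarith
  have hα : 0 < P - ν*P - 2 := by
    have h := (lt_div_iff₀ hP0).1 hν'
    linarith
  set α : ℝ := P - ν*P - 2 with hαdef
  set b : ℝ := (P-1)/(P-2) with hbdef
  have hb : 0 < b := div_pos (by linarith) (by linarith)
  have hbP : 0 < b ^ (P-1) := Real.rpow_pos_of_pos hb _
  refine ⟨b ^ (P-1) * α⁻¹, mul_pos hbP (inv_pos.2 hα), ?_⟩
  intro f U hU hDU hf hf0
  set T := Set.Ioc (0:ℝ) 1 with hT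
  -- continuity/measurability facts
  have hfc : ContinuousOn (fderiv ℝ f) U := hf.continuousOn_fderiv_of_isOpen hU le_rfl
  have hfd_meas : Measurable (fderiv ℝ f) := measurable_fderiv ℝ f
  set G : ℂ → ℝ≥0∞ := fun w => ENNReal.ofReal ‖fderiv ℝ f w‖ ^ P with hGdef
  have hGmeas : Measurable G :=
    ENNReal.continuous_rpow_const.measurable.comp (ENNReal.measurable_ofReal.comp hfd_meas.norm)
  set W : ℂ → ℝ≥0∞ := fun z => ENNReal.ofReal ‖z‖ ^ α with hWdef
  have hWmeas : Measurable W :=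
    ENNReal.continuous_rpow_const.measurable.comp (ENNReal.measurable_ofReal.comp measurable_norm)
  have hWne : ∀ z, W z ≠ ∞ := fun z =>
    ENNReal.rpow_ne_top_of_nonneg hα.le ENNReal.ofReal_ne_top
  have hGne : ∀ z, G z ≠ ∞ := fun z =>
    ENNReal.rpow_ne_top_of_nonneg hP0.le ENNReal.ofReal_ne_top
  have hGsmul_meas : Measurable fun q : ℂ × ℝ => G (q.2 • q.1) :=
    hGmeas.comp (measurable_snd.smul measurable_fst)
  set I : ℂ → ℝ≥0∞ := fun z => ∫⁻ t in T, ENNReal.ofReal t * G (t • z) with hIdef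
  have hImeas : Measurable I :=
    Measurable.lintegral_prod_right'
      ((ENNReal.measurable_ofReal.comp measurable_snd).mul hGsmul_meas)
  -- pointwise bound
  have hxexp : -(ν * P + 2) ≠ 0 := by
    have : 0 < ν * P + 2 := by positivity
    intro h; linarith [neg_eq_zero.1 h]
  have key3 : ∀ z ∈ closedBall (0:ℂ) 1, ENNReal.ofReal (|f z| ^ p * ‖z‖ ^ (-(ν * P + 2)))
      ≤ ENNReal.ofReal (b ^ (P-1)) * (W z * I z) := by
    intro z hz
    rcases eq_or_ne z 0 with rfl | hz0
    · have h0 : ‖(0:ℂ)‖ ^ (-(ν * P + 2)) = 0 := by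
        rw [norm_zero, Real.zero_rpow hxexp]
      rw [h0, mul_zero, ENNReal.ofReal_zero]
      exact zero_le
    · have hzpos : 0 < ‖z‖ := norm_pos_iff.2 hz0
      have hL : ENNReal.ofReal (|f z| ^ p * ‖z‖ ^ (-(ν * P + 2)))
          = ENNReal.ofReal |f z| ^ P * ENNReal.ofReal ‖z‖ ^ (-(ν * P + 2)) := by
        rw [ENNReal.ofReal_mul (by positivity), ENNReal.ofReal_pow (abs_nonneg _),
          ← ENNReal.ofReal_rpow_of_pos hzpos, hPdef, ENNReal.rpow_natCast]
      have hg_meas : Measurable fun t : ℝ => ENNReal.ofReal ‖fderiv ℝ f (t • z)‖ :=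
        ENNReal.measurable_ofReal.comp ((hfd_meas.comp (measurable_id.smul_const z)).norm)
      have hcont : ContinuousOn (fun t : ℝ => ‖fderiv ℝ f (t • z)‖) (Set.Icc 0 1) := by
        apply ContinuousOn.norm
        apply hfc.comp (Continuous.continuousOn (by continuity))
        intro t ht
        apply hDU
        rw [mem_closedBall_zero_iff] at hz ⊢
        rw [norm_smul]
        calc ‖t‖ * ‖z‖ ≤ 1 * 1 := by
              apply mul_le_mul _ hz (norm_nonneg _) zero_le_one
              rw [Real.norm_eq_abs, abs_le]; constructor <;> linarith [ht.1, ht.2]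
          _ = 1 := by ring
      have hIntOn : IntegrableOn (fun t : ℝ => ‖fderiv ℝ f (t • z)‖) T :=
        (hcont.integrableOn_compact isCompact_Icc).mono_set Set.Ioc_subset_Icc_self
      have hofReal : ENNReal.ofReal (∫ t in (0:ℝ)..1, ‖fderiv ℝ f (t • z)‖)
          = ∫⁻ t in T, ENNReal.ofReal ‖fderiv ℝ f (t • z)‖ := by
        rw [intervalIntegral.integral_of_le zero_le_one,
          ofReal_integral_eq_lintegral_ofReal hIntOn
            (Filter.Eventually.of_forall fun t => norm_nonneg _)]
      have hfz : ENNReal.ofReal |f z|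
          ≤ (∫⁻ t in T, ENNReal.ofReal ‖fderiv ℝ f (t • z)‖) * ENNReal.ofReal ‖z‖ := by
        calc ENNReal.ofReal |f z|
            ≤ ENNReal.ofReal ((∫ t in (0:ℝ)..1, ‖fderiv ℝ f (t • z)‖) * ‖z‖) :=
              ENNReal.ofReal_le_ofReal (ftc_ray_bound f U hU hDU hf hf0 hz)
          _ = _ := by
              rw [ENNReal.ofReal_mul (intervalIntegral.integral_nonneg zero_le_one
                (fun t _ => norm_nonneg _)), hofReal]
      have hhold := hoelder_step hP hg_meas
      have hpow : ENNReal.ofReal |f z| ^ P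
          ≤ ENNReal.ofReal (b ^ (P-1)) * I z * ENNReal.ofReal ‖z‖ ^ P := by
        calc ENNReal.ofReal |f z| ^ P
            ≤ ((∫⁻ t in T, ENNReal.ofReal ‖fderiv ℝ f (t • z)‖) * ENNReal.ofReal ‖z‖) ^ P :=
              ENNReal.rpow_le_rpow hfz hP0.le
          _ = (∫⁻ t in T, ENNReal.ofReal ‖fderiv ℝ f (t • z)‖) ^ P * ENNReal.ofReal ‖z‖ ^ P :=
              ENNReal.mul_rpow_of_nonneg _ _ hP0.le
          _ ≤ (ENNReal.ofReal (b ^ (P-1)) * I z) * ENNReal.ofReal ‖z‖ ^ P := by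
              apply mul_le_mul_left
              exact hhold
      rw [hL]
      have hWz : ENNReal.ofReal ‖z‖ ^ P * ENNReal.ofReal ‖z‖ ^ (-(ν*P+2)) = W z := by
        rw [← ENNReal.rpow_add _ _ (by simpa [ENNReal.ofReal_eq_zero, not_le] using hzpos)
          ENNReal.ofReal_ne_top]
        rw [hWdef]
        congr 1
        rw [hαdef]; ring
      calc ENNReal.ofReal |f z| ^ P * ENNReal.ofReal ‖z‖ ^ (-(ν * P + 2))
          ≤ (ENNReal.ofReal (b ^ (P-1)) * I z * ENNReal.ofReal ‖z‖ ^ P)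
              * ENNReal.ofReal ‖z‖ ^ (-(ν * P + 2)) := mul_le_mul_left hpow _
        _ = ENNReal.ofReal (b ^ (P-1)) *
              (ENNReal.ofReal ‖z‖ ^ P * ENNReal.ofReal ‖z‖ ^ (-(ν*P+2)) * I z) := by ring
        _ = ENNReal.ofReal (b ^ (P-1)) * (W z * I z) := by rw [hWz]
  -- step 1
  have step1 : (∫⁻ z in closedBall (0:ℂ) 1, ENNReal.ofReal (|f z| ^ p * ‖z‖ ^ (-(ν * P + 2))))
      ≤ ENNReal.ofReal (b ^ (P-1)) * ∫⁻ z in closedBall (0:ℂ) 1, W z * I z := by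
    rw [← lintegral_const_mul' _ _ ENNReal.ofReal_ne_top]
    exact setLIntegral_mono (measurable_const.mul (hWmeas.mul hImeas)) key3
  have hswap1meas : Measurable fun q : ℂ × ℝ => W q.1 * (ENNReal.ofReal q.2 * G (q.2 • q.1)) :=
    (hWmeas.comp measurable_fst).mul
      ((ENNReal.measurable_ofReal.comp measurable_snd).mul hGsmul_meas)
  have step2 : (∫⁻ z in closedBall (0:ℂ) 1, W z * I z)
      = ∫⁻ t in T, ∫⁻ z in closedBall (0:ℂ) 1, W z * (ENNReal.ofReal t * G (t • z)) := by
    have h1 : ∀ z, W z * I z = ∫⁻ t in T, W z * (ENNReal.ofReal t * G (t • z)) := fun z =>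
      (lintegral_const_mul' _ _ (hWne z)).symm
    simp_rw [h1]
    exact lintegral_lintegral_swap hswap1meas.aemeasurable
  set WG : ℂ → ℝ≥0∞ := fun w => W w * G w with hWGdef
  have step3 : ∀ t ∈ T, (∫⁻ z in closedBall (0:ℂ) 1, W z * (ENNReal.ofReal t * G (t • z)))
      = ENNReal.ofReal (t ^ (-(1+α))) *
        ∫⁻ w in closedBall (0:ℂ) 1, (closedBall (0:ℂ) t).indicator WG w := by
    intro t ht
    have ht0 : 0 < t := ht.1
    have e1 : (∫⁻ z in closedBall (0:ℂ) 1, W z * (ENNReal.ofReal t * G (t • z)))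
        = ENNReal.ofReal t * ∫⁻ z in closedBall (0:ℂ) 1, W z * G (t • z) := by
      rw [← lintegral_const_mul' _ _ ENNReal.ofReal_ne_top]
      congr 1
      funext z
      ring
    set F : ℂ → ℝ≥0∞ := (closedBall (0:ℂ) t).indicator
        (fun w => ENNReal.ofReal (t ^ (-α)) * WG w) with hFdef
    have hFmeas : Measurable F :=
      (measurable_const.mul (hWmeas.mul hGmeas)).indicator measurableSet_closedBall
    have hkey : ∀ z, (closedBall (0:ℂ) 1).indicator (fun z => W z * G (t • z)) z = F (t • z) := by
      intro z
      by_cases hz : z ∈ closedBall (0:ℂ) 1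
      · have hz' : t • z ∈ closedBall (0:ℂ) t := by
          rw [mem_closedBall_zero_iff] at hz ⊢
          rw [norm_smul, Real.norm_eq_abs, abs_of_pos ht0]
          calc t * ‖z‖ ≤ t * 1 := mul_le_mul_of_nonneg_left hz ht0.le
            _ = t := mul_one t
        rw [Set.indicator_of_mem hz, hFdef, Set.indicator_of_mem hz', hWGdef]
        simp only
        have hW : W (t • z) = ENNReal.ofReal (t ^ α) * W z := by
          rw [hWdef]
          simp only
          rw [norm_smul, Real.norm_eq_abs, abs_of_pos ht0, ENNReal.ofReal_mul ht0.le,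
            ENNReal.mul_rpow_of_nonneg _ _ hα.le, ENNReal.ofReal_rpow_of_pos ht0]
        have hcancel : ENNReal.ofReal (t ^ (-α)) * ENNReal.ofReal (t ^ α) = 1 := by
          rw [← ENNReal.ofReal_mul (Real.rpow_nonneg ht0.le _), ← Real.rpow_add ht0]
          norm_num
        rw [hW]
        calc W z * G (t • z)
            = (ENNReal.ofReal (t ^ (-α)) * ENNReal.ofReal (t ^ α)) * (W z * G (t • z)) := by
              rw [hcancel, one_mul]
          _ = ENNReal.ofReal (t ^ (-α)) * (ENNReal.ofReal (t ^ α) * W z * G (t • z)) := by ring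
      · have hz' : t • z ∉ closedBall (0:ℂ) t := by
          rw [mem_closedBall_zero_iff] at hz ⊢
          rw [norm_smul, Real.norm_eq_abs, abs_of_pos ht0]
          intro hc
          refine hz (le_of_mul_le_mul_left ?_ ht0)
          calc t * ‖z‖ ≤ t := hc
            _ = t * 1 := (mul_one t).symm
        rw [Set.indicator_of_notMem hz, hFdef, Set.indicator_of_notMem hz']
    have e2 : (∫⁻ z in closedBall (0:ℂ) 1, W z * G (t • z)) = ∫⁻ z, F (t • z) := by
      rw [← lintegral_indicator measurableSet_closedBall]
      exact lintegral_congr hkey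
    have e3 : (∫⁻ w, F w) = ENNReal.ofReal (t ^ (-α)) *
        ∫⁻ w in closedBall (0:ℂ) 1, (closedBall (0:ℂ) t).indicator WG w := by
      rw [hFdef, lintegral_indicator measurableSet_closedBall,
        lintegral_const_mul' _ _ ENNReal.ofReal_ne_top]
      congr 1
      rw [lintegral_indicator measurableSet_closedBall,
        Measure.restrict_restrict measurableSet_closedBall,
        Set.inter_eq_left.2 (closedBall_subset_closedBall ht.2)]
    rw [e1, e2, lintegral_comp_smul_complex F hFmeas ht0.ne', e3, ← mul_assoc, ← mul_assoc]
    congr 2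
    rw [← ENNReal.ofReal_mul ht0.le, ← ENNReal.ofReal_mul (by positivity)]
    congr 1
    have h2 : t * (t^2)⁻¹ = t ^ (-1 : ℝ) := by
      rw [Real.rpow_neg_one]
      field_simp
    rw [h2, ← Real.rpow_add ht0]
    congr 1
    ring
  have hΨmeas : Measurable fun q : ℝ × ℂ =>
      ENNReal.ofReal (q.1 ^ (-(1+α))) * (closedBall (0:ℂ) q.1).indicator WG q.2 := by
    apply Measurable.mul
    · exact ENNReal.measurable_ofReal.comp (measurable_fst.pow measurable_const)
    · have hrw : (fun q : ℝ × ℂ => (closedBall (0:ℂ) q.1).indicator WG q.2)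
          = Set.indicator {q : ℝ × ℂ | ‖q.2‖ ≤ q.1} (fun q => WG q.2) := by
        funext q
        simp only [Set.indicator_apply, Set.mem_setOf_eq]
        by_cases h : ‖q.2‖ ≤ q.1
        · rw [if_pos h, Set.indicator_of_mem (mem_closedBall_zero_iff.2 h)]
        · rw [if_neg h, Set.indicator_of_notMem (fun hc => h (mem_closedBall_zero_iff.1 hc))]
      rw [hrw]
      exact ((hWmeas.mul hGmeas).comp measurable_snd).indicator
        (measurableSet_le (measurable_norm.comp measurable_snd) measurable_fst)
  have step4 : (∫⁻ t in T, ENNReal.ofReal (t ^ (-(1+α))) *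
        ∫⁻ w in closedBall (0:ℂ) 1, (closedBall (0:ℂ) t).indicator WG w)
      = ∫⁻ w in closedBall (0:ℂ) 1, ∫⁻ t in T,
          ENNReal.ofReal (t ^ (-(1+α))) * (closedBall (0:ℂ) t).indicator WG w := by
    have h1 : ∀ t : ℝ, ENNReal.ofReal (t ^ (-(1+α))) *
          (∫⁻ w in closedBall (0:ℂ) 1, (closedBall (0:ℂ) t).indicator WG w)
        = ∫⁻ w in closedBall (0:ℂ) 1,
            ENNReal.ofReal (t ^ (-(1+α))) * (closedBall (0:ℂ) t).indicator WG w := fun t =>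
      (lintegral_const_mul' _ _ ENNReal.ofReal_ne_top).symm
    simp_rw [h1]
    exact lintegral_lintegral_swap hΨmeas.aemeasurable
  have step5 : ∀ w ∈ closedBall (0:ℂ) 1,
      (∫⁻ t in T, ENNReal.ofReal (t ^ (-(1+α))) * (closedBall (0:ℂ) t).indicator WG w)
      ≤ ENNReal.ofReal α⁻¹ * G w := by
    intro w hw
    rcases eq_or_ne w 0 with rfl | hw0
    · have hW0 : WG (0:ℂ) = 0 := by
        rw [hWGdef]
        simp only
        rw [hWdef]
        simp only [norm_zero, ENNReal.ofReal_zero, ENNReal.zero_rpow_of_pos hα, zero_mul]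
      have hz : ∀ t : ℝ, (closedBall (0:ℂ) t).indicator WG 0 = 0 := by
        intro t
        by_cases h : (0:ℂ) ∈ closedBall (0:ℂ) t
        · rw [Set.indicator_of_mem h, hW0]
        · rw [Set.indicator_of_notMem h]
      simp_rw [hz, mul_zero, lintegral_zero]
      exact zero_le
    · have hs : 0 < ‖w‖ := norm_pos_iff.2 hw0
      have hs1 : ‖w‖ ≤ 1 := mem_closedBall_zero_iff.1 hw
      have hind : ∀ t : ℝ, ENNReal.ofReal (t ^ (-(1+α))) * (closedBall (0:ℂ) t).indicator WG w
          = (Set.Ici ‖w‖).indicator (fun t => ENNReal.ofReal (t ^ (-(1+α))) * WG w) t := by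
        intro t
        by_cases h : ‖w‖ ≤ t
        · rw [Set.indicator_of_mem (Set.mem_Ici.2 h),
            Set.indicator_of_mem (mem_closedBall_zero_iff.2 h)]
        · rw [Set.indicator_of_notMem (fun hc => h (Set.mem_Ici.1 hc)),
            Set.indicator_of_notMem (fun hc => h (mem_closedBall_zero_iff.1 hc)), mul_zero]
      calc (∫⁻ t in T, ENNReal.ofReal (t ^ (-(1+α))) * (closedBall (0:ℂ) t).indicator WG w)
          = ∫⁻ t in T, (Set.Ici ‖w‖).indicator
              (fun t => ENNReal.ofReal (t ^ (-(1+α))) * WG w) t :=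
            lintegral_congr fun t => hind t
        _ = ∫⁻ t in Set.Icc ‖w‖ 1, ENNReal.ofReal (t ^ (-(1+α))) * WG w := by
            rw [lintegral_indicator measurableSet_Ici,
              Measure.restrict_restrict measurableSet_Ici]
            congr 2
            ext x
            simp only [Set.mem_inter_iff, Set.mem_Ici, Set.mem_Ioc, Set.mem_Icc, hT]
            constructor
            · rintro ⟨h1, _, h3⟩; exact ⟨h1, h3⟩
            · rintro ⟨h1, h2⟩; exact ⟨h1, lt_of_lt_of_le hs h1, h2⟩
        _ = (∫⁻ t in Set.Icc ‖w‖ 1, ENNReal.ofReal (t ^ (-(1+α)))) * WG w :=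
            lintegral_mul_const' _ _ (ENNReal.mul_ne_top (hWne w) (hGne w))
        _ ≤ ENNReal.ofReal (‖w‖ ^ (-α) / α) * WG w :=
            mul_le_mul_left (lintegral_rpow_Icc_tail hα hs hs1) _
        _ = ENNReal.ofReal α⁻¹ * G w := by
            rw [div_eq_mul_inv, ENNReal.ofReal_mul (Real.rpow_nonneg hs.le _), hWGdef]
            simp only
            rw [hWdef]
            simp only
            rw [ENNReal.ofReal_rpow_of_pos hs]
            calc ENNReal.ofReal (‖w‖ ^ (-α)) * ENNReal.ofReal α⁻¹
                  * (ENNReal.ofReal (‖w‖ ^ α) * G w)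
                = (ENNReal.ofReal (‖w‖ ^ (-α)) * ENNReal.ofReal (‖w‖ ^ α))
                  * (ENNReal.ofReal α⁻¹ * G w) := by ring
              _ = ENNReal.ofReal α⁻¹ * G w := by
                  rw [← ENNReal.ofReal_mul (Real.rpow_nonneg hs.le _), ← Real.rpow_add hs,
                    neg_add_cancel, Real.rpow_zero, ENNReal.ofReal_one, one_mul]
  -- final conversion and assembly
  have hDfcont : ContinuousOn (fun w : ℂ => ‖fderiv ℝ f w‖ ^ p) (closedBall (0:ℂ) 1) :=
    ((hfc.mono hDU).norm).pow p
  have hDfint : IntegrableOn (fun w : ℂ => ‖fderiv ℝ f w‖ ^ p) (closedBall (0:ℂ) 1) :=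
    hDfcont.integrableOn_compact (isCompact_closedBall _ _)
  have hGeq : (∫⁻ w in closedBall (0:ℂ) 1, G w)
      = ENNReal.ofReal (∫ w in closedBall (0:ℂ) 1, ‖fderiv ℝ f w‖ ^ p) := by
    rw [ofReal_integral_eq_lintegral_ofReal hDfint
      (Filter.Eventually.of_forall fun w => by positivity)]
    apply lintegral_congr
    intro w
    rw [hGdef]
    simp only
    rw [hPdef, ENNReal.rpow_natCast, ← ENNReal.ofReal_pow (norm_nonneg _)]
  have hfpnn : 0 ≤ ∫ z in closedBall (0:ℂ) 1, |f z| ^ p :=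
    integral_nonneg fun z => by positivity
  have hDfnn : 0 ≤ ∫ z in closedBall (0:ℂ) 1, ‖fderiv ℝ f z‖ ^ p :=
    integral_nonneg fun z => by positivity
  calc (∫⁻ z in closedBall (0:ℂ) 1, ENNReal.ofReal (|f z| ^ p * ‖z‖ ^ (-(ν * P + 2))))
      ≤ ENNReal.ofReal (b ^ (P-1)) * ∫⁻ z in closedBall (0:ℂ) 1, W z * I z := step1
    _ = ENNReal.ofReal (b ^ (P-1)) * ∫⁻ t in T, ∫⁻ z in closedBall (0:ℂ) 1,
          W z * (ENNReal.ofReal t * G (t • z)) := by rw [step2]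
    _ = ENNReal.ofReal (b ^ (P-1)) * ∫⁻ t in T, ENNReal.ofReal (t ^ (-(1+α))) *
          ∫⁻ w in closedBall (0:ℂ) 1, (closedBall (0:ℂ) t).indicator WG w := by
        congr 1
        refine setLIntegral_congr_fun measurableSet_Ioc ?_
        exact step3
    _ = ENNReal.ofReal (b ^ (P-1)) * ∫⁻ w in closedBall (0:ℂ) 1, ∫⁻ t in T,
          ENNReal.ofReal (t ^ (-(1+α))) * (closedBall (0:ℂ) t).indicator WG w := by rw [step4]
    _ ≤ ENNReal.ofReal (b ^ (P-1)) * ∫⁻ w in closedBall (0:ℂ) 1, ENNReal.ofReal α⁻¹ * G w := by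
        exact mul_le_mul_right (setLIntegral_mono (measurable_const.mul hGmeas) step5) _
    _ = ENNReal.ofReal (b ^ (P-1)) * (ENNReal.ofReal α⁻¹ *
          ENNReal.ofReal (∫ w in closedBall (0:ℂ) 1, ‖fderiv ℝ f w‖ ^ p)) := by
        rw [lintegral_const_mul' _ _ ENNReal.ofReal_ne_top, hGeq]
    _ ≤ ENNReal.ofReal (b ^ (P-1) * α⁻¹ * ((∫ z in closedBall (0:ℂ) 1, |f z| ^ p) +
          ∫ z in closedBall (0:ℂ) 1, ‖fderiv ℝ f z‖ ^ p)) := by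
        rw [← ENNReal.ofReal_mul (by positivity), ← ENNReal.ofReal_mul (by positivity)]
        apply ENNReal.ofReal_le_ofReal
        have hc : 0 ≤ b ^ (P-1) * α⁻¹ := by positivity
        nlinarith [mul_nonneg hc hfpnn]
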